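/- In the commuting-observable quantum setting, let AC ⊆ {1,…,N}, let P be a finite family of pairs (s,t) of stabilizer sign sequences and R a finite family of sign sequences satisfying Requirements 1 and 2, and let B = Σ_{(s,t)∈P}(B_s + B_t) + Σ_{u∈R} B_u be the associated Bell operator, where B_s = ∏_{i∈AC, s_i≠0}(A_i + s_i B_i) · ∏_{i∉AC} O_i(s_i). Then the operator (2√2·|P| + |R|)·I − B is positive semidefinite; in particular ⟨ψ, B ψ⟩ ≤ 2√2·|P| + |R| for every unit vector ψ. -/

import Mathlib

/-!
STATEMENT 5: quantum bound `2√2|P| + |R|` for the general Bell operator built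
from a family `P` of pairs of sign sequences and a family `R` of sign
sequences satisfying Requirements 1 and 2 w.r.t. the set `AC`:
`(2√2|P| + |R|)·I − B` is positive semidefinite, hence the expectation of `B`
in any unit vector is at most `2√2|P| + |R|`.
-/

open scoped InnerProductSpace

noncomputable section

variable {N : ℕ} {H : Type} [NormedAddCommGroup H] [InnerProductSpace ℂ H]

/-- The observable associated to the symbol `k`: `O_i(0) = I`, `O_i(+1) = A_i`,
`O_i(-1) = B_i`. -/
def obs (A B : Fin N → H →ₗ[ℂ] H) (i : Fin N) (k : ℤ) : H →ₗ[ℂ] H :=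
  if k = 1 then A i else if k = -1 then B i else 1

/-- The Bell operator term
`B_s = ∏_{i∈AC, s_i≠0} (A_i + s_i B_i) · ∏_{i∉AC} O_i(s_i)`
(products taken in the canonical order of `Fin N`; all factors commute). -/
def bellTerm (A B : Fin N → H →ₗ[ℂ] H) (AC : Finset (Fin N)) (s : Fin N → ℤ) :
    H →ₗ[ℂ] H :=
  (((List.finRange N).filter (fun i => i ∈ AC ∧ s i ≠ 0)).map
      (fun i => A i + s i • B i)).prod *
  (((List.finRange N).filter (fun i => i ∉ AC)).map
      (fun i => obs A B i (s i))).prod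

def obsProd (A B : Fin N → H →ₗ[ℂ] H) (AC : Finset (Fin N)) (s : Fin N → ℤ) :
    H →ₗ[ℂ] H :=
  (((List.finRange N).filter (fun i => i ∉ AC)).map (fun i => obs A B i (s i))).prod

lemma one_sym : (1 : H →ₗ[ℂ] H).IsSymmetric := fun _ _ => rfl

lemma smul_one_sym (r : ℝ) : ((r : ℂ) • (1 : H →ₗ[ℂ] H)).IsSymmetric := by
  intro x y
  rw [LinearMap.smul_apply, LinearMap.smul_apply, inner_smul_left, inner_smul_right,
    Complex.conj_ofReal]; rfl

lemma mul_sym {a p : H →ₗ[ℂ] H} (ha : a.IsSymmetric) (hp : p.IsSymmetric)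
    (hc : Commute a p) : (a * p).IsSymmetric := by
  intro x y
  calc ⟪(a * p) x, y⟫_ℂ = ⟪p x, a y⟫_ℂ := ha _ _
    _ = ⟪x, (p * a) y⟫_ℂ := hp _ _
    _ = ⟪x, (a * p) y⟫_ℂ := by rw [hc.eq]

lemma prod_sym {l : List (H →ₗ[ℂ] H)} (hc : l.Pairwise Commute)
    (hs : ∀ x ∈ l, x.IsSymmetric) : l.prod.IsSymmetric := by
  induction l with
  | nil => simpa using one_sym
  | cons a l ih =>
    rw [List.pairwise_cons] at hc
    rw [List.prod_cons]
    exact mul_sym (hs a (by simp)) (ih hc.2 (fun x hx => hs x (by simp [hx])))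
      (Commute.list_prod_right _ _ hc.1)

lemma prod_sq {l : List (H →ₗ[ℂ] H)} (hc : l.Pairwise Commute)
    (hs : ∀ x ∈ l, x * x = 1) : l.prod * l.prod = 1 := by
  induction l with
  | nil => simp
  | cons a l ih =>
    rw [List.pairwise_cons] at hc
    have hap : Commute a l.prod := Commute.list_prod_right _ _ hc.1
    rw [List.prod_cons]
    calc a * l.prod * (a * l.prod) = a * (l.prod * a) * l.prod := by
          rw [mul_assoc, mul_assoc, mul_assoc]
      _ = a * (a * l.prod) * l.prod := by rw [hap.eq]
      _ = (a * a) * (l.prod * l.prod) := by rw [mul_assoc, mul_assoc, mul_assoc]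
      _ = 1 := by rw [hs a (by simp), ih hc.2 (fun x hx => hs x (by simp [hx])), one_mul]

lemma inv_pos_part {C : H →ₗ[ℂ] H} (hsym : C.IsSymmetric) (hsq : C * C = 1) :
    ∀ φ : H, 0 ≤ (⟪φ, ((1 : H →ₗ[ℂ] H) - C) φ⟫_ℂ).re := by
  intro φ
  set D : H →ₗ[ℂ] H := 1 - C with hD
  have hDsym : D.IsSymmetric := one_sym.sub hsym
  have hsq2 : D * D = (2 : ℂ) • D := by
    simp only [hD, sub_mul, mul_sub, one_mul, mul_one, hsq]
    module
  have key : ⟪D φ, D φ⟫_ℂ = (2 : ℂ) * ⟪φ, D φ⟫_ℂ := by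
    calc ⟪D φ, D φ⟫_ℂ = ⟪φ, D (D φ)⟫_ℂ := hDsym _ _
      _ = ⟪φ, (D * D) φ⟫_ℂ := rfl
      _ = ⟪φ, ((2:ℂ) • D) φ⟫_ℂ := by rw [hsq2]
      _ = (2:ℂ) * ⟪φ, D φ⟫_ℂ := by
          rw [LinearMap.smul_apply, inner_smul_right]
  have h1 : ‖D φ‖ ^ 2 = 2 * (⟪φ, D φ⟫_ℂ).re := by
    have h2 := congrArg Complex.re key
    have h3 : (⟪D φ, D φ⟫_ℂ).re = ‖D φ‖ ^ 2 := by
      simpa using inner_self_eq_norm_sq (𝕜 := ℂ) (D φ)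
    simp [Complex.mul_re] at h2
    simp only [← Complex.ofReal_pow, Complex.ofReal_re] at h2
    linarith
  nlinarith [sq_nonneg ‖D φ‖]
lemma sos_pos {X Y : H →ₗ[ℂ] H} (hX : X.IsSymmetric) (hY : Y.IsSymmetric)
    (hsq : X * X + Y * Y = (4 : ℂ) • 1) :
    ∀ φ : H, 0 ≤ (⟪φ, ((((2 * Real.sqrt 2 : ℝ)) : ℂ) • (1 : H →ₗ[ℂ] H) - (X + Y)) φ⟫_ℂ).re := by
  intro φ
  obtain ⟨γ, hγdef⟩ : ∃ γ : ℂ, γ = ((Real.sqrt 2 : ℝ) : ℂ) := ⟨_, rfl⟩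
  have hγ : γ * γ = 2 := by
    rw [hγdef, ← Complex.ofReal_mul, Real.mul_self_sqrt (by norm_num)]
    norm_num
  set M : H →ₗ[ℂ] H := (((2 * Real.sqrt 2 : ℝ)) : ℂ) • (1 : H →ₗ[ℂ] H) - (X + Y) with hM
  set U : H →ₗ[ℂ] H := γ • 1 - X with hU
  set V : H →ₗ[ℂ] H := γ • 1 - Y with hV
  have hXX : X * X = (4 : ℂ) • (1 : H →ₗ[ℂ] H) - Y * Y := by rw [← hsq]; abel
  have key : U * U + V * V = ((2 * Real.sqrt 2 : ℝ) : ℂ) • M := by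
    rw [hU, hV, hM]
    have hcast : ((2 * Real.sqrt 2 : ℝ) : ℂ) = 2 * γ := by push_cast [hγdef]; ring
    rw [hcast]
    simp only [sub_mul, mul_sub, smul_mul_assoc, mul_smul_comm, one_mul, mul_one, smul_smul, hXX]
    match_scalars <;> first | ring1 | linear_combination (-2:ℂ) * hγ
  have hUsym : U.IsSymmetric := by rw [hU, hγdef]; exact (smul_one_sym _).sub hX
  have hVsym : V.IsSymmetric := by rw [hV, hγdef]; exact (smul_one_sym _).sub hY
  have key2 : ‖U φ‖ ^ 2 + ‖V φ‖ ^ 2 = (2 * Real.sqrt 2) * (⟪φ, M φ⟫_ℂ).re := by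
    have e1 : ⟪U φ, U φ⟫_ℂ = ⟪φ, (U * U) φ⟫_ℂ := hUsym _ _
    have e2 : ⟪V φ, V φ⟫_ℂ = ⟪φ, (V * V) φ⟫_ℂ := hVsym _ _
    have e3 : ⟪φ, (U * U) φ⟫_ℂ + ⟪φ, (V * V) φ⟫_ℂ = ⟪φ, (U * U + V * V) φ⟫_ℂ := by
      rw [LinearMap.add_apply, inner_add_right]
    have e4 : ⟪φ, (U * U + V * V) φ⟫_ℂ = ((2 * Real.sqrt 2 : ℝ) : ℂ) * ⟪φ, M φ⟫_ℂ := by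
      rw [key, LinearMap.smul_apply, inner_smul_right]
    have e5 : (⟪U φ, U φ⟫_ℂ).re = ‖U φ‖ ^ 2 := by
      simpa using inner_self_eq_norm_sq (𝕜 := ℂ) (U φ)
    have e6 : (⟪V φ, V φ⟫_ℂ).re = ‖V φ‖ ^ 2 := by
      simpa using inner_self_eq_norm_sq (𝕜 := ℂ) (V φ)
    have etot : ⟪U φ, U φ⟫_ℂ + ⟪V φ, V φ⟫_ℂ = ((2 * Real.sqrt 2 : ℝ) : ℂ) * ⟪φ, M φ⟫_ℂ := by
      rw [e1, e2, e3, e4]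
    have hre := congrArg Complex.re etot
    rw [Complex.add_re, e5, e6] at hre
    rw [hre, Complex.mul_re]
    simp
  have hpos : (0:ℝ) < 2 * Real.sqrt 2 := by positivity
  nlinarith [sq_nonneg ‖U φ‖, sq_nonneg ‖V φ‖]

section AB
variable {A B : Fin N → H →ₗ[ℂ] H}

lemma obs_sym (hAsa : ∀ i, (A i).IsSymmetric) (hBsa : ∀ i, (B i).IsSymmetric) (i : Fin N) (k : ℤ) : (obs A B i k).IsSymmetric := by
  unfold obs; split_ifs
  · exact hAsa i
  · exact hBsa i
  · exact one_sym

lemma obs_sq (hA2 : ∀ i, A i * A i = 1) (hB2 : ∀ i, B i * B i = 1) (i : Fin N) (k : ℤ) : obs A B i k * obs A B i k = 1 := by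
  unfold obs; split_ifs
  · exact hA2 i
  · exact hB2 i
  · exact one_mul 1

lemma obs_comm (hAA : ∀ i j, i ≠ j → Commute (A i) (A j))
    (hBB : ∀ i j, i ≠ j → Commute (B i) (B j))
    (hAB : ∀ i j, i ≠ j → Commute (A i) (B j)) {i j : Fin N} (h : i ≠ j) (k m : ℤ) :
    Commute (obs A B i k) (obs A B j m) := by
  unfold obs; split_ifs
  all_goals first
    | exact hAA i j h
    | exact hAB i j h
    | exact (hAB j i h.symm).symm
    | exact hBB i j h
    | exact Commute.one_left _
    | exact Commute.one_right _

lemma A_comm_obs (hAA : ∀ i j, i ≠ j → Commute (A i) (A j))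
    (hAB : ∀ i j, i ≠ j → Commute (A i) (B j)) {i j : Fin N} (h : i ≠ j) (k : ℤ) :
    Commute (A i) (obs A B j k) := by
  unfold obs; split_ifs
  · exact hAA i j h
  · exact hAB i j h
  · exact Commute.one_right _

lemma B_comm_obs (hBB : ∀ i j, i ≠ j → Commute (B i) (B j))
    (hAB : ∀ i j, i ≠ j → Commute (A i) (B j)) {i j : Fin N} (h : i ≠ j) (k : ℤ) :
    Commute (B i) (obs A B j k) := by
  unfold obs; split_ifs
  · exact (hAB j i h.symm).symm
  · exact hBB i j h
  · exact Commute.one_right _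

lemma factor_comm_obs (hAA : ∀ i j, i ≠ j → Commute (A i) (A j))
    (hBB : ∀ i j, i ≠ j → Commute (B i) (B j))
    (hAB : ∀ i j, i ≠ j → Commute (A i) (B j)) {i j : Fin N} (h : i ≠ j) (n k : ℤ) :
    Commute (A i + n • B i) (obs A B j k) := by
  apply Commute.add_left
  · exact A_comm_obs hAA hAB h k
  · rw [← Int.cast_smul_eq_zsmul ℂ]
    exact (B_comm_obs hBB hAB h k).smul_left ((n : ℤ) : ℂ)

lemma obsProd_sym (hAsa : ∀ i, (A i).IsSymmetric) (hBsa : ∀ i, (B i).IsSymmetric) (hAA : ∀ i j, i ≠ j → Commute (A i) (A j))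
    (hBB : ∀ i j, i ≠ j → Commute (B i) (B j))
    (hAB : ∀ i j, i ≠ j → Commute (A i) (B j)) (AC : Finset (Fin N)) (s : Fin N → ℤ) :
    (obsProd A B AC s).IsSymmetric := by
  apply prod_sym
  · apply List.Pairwise.map _ _
      (((List.nodup_finRange N).filter _ :
        ((List.finRange N).filter (fun i => i ∉ AC)).Nodup) : List.Pairwise _ _)
    intro a b hab
    exact obs_comm hAA hBB hAB hab _ _
  · intro x hx
    obtain ⟨i, _, rfl⟩ := List.mem_map.mp hx
    exact obs_sym hAsa hBsa i _

lemma obsProd_sq (hA2 : ∀ i, A i * A i = 1) (hB2 : ∀ i, B i * B i = 1) (hAA : ∀ i j, i ≠ j → Commute (A i) (A j))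
    (hBB : ∀ i j, i ≠ j → Commute (B i) (B j))
    (hAB : ∀ i j, i ≠ j → Commute (A i) (B j)) (AC : Finset (Fin N)) (s : Fin N → ℤ) :
    obsProd A B AC s * obsProd A B AC s = 1 := by
  apply prod_sq
  · apply List.Pairwise.map _ _
      (((List.nodup_finRange N).filter _ :
        ((List.finRange N).filter (fun i => i ∉ AC)).Nodup) : List.Pairwise _ _)
    intro a b hab
    exact obs_comm hAA hBB hAB hab _ _
  · intro x hx
    obtain ⟨i, _, rfl⟩ := List.mem_map.mp hx
    exact obs_sq hA2 hB2 i _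

lemma factor_comm_obsProd (hAA : ∀ i j, i ≠ j → Commute (A i) (A j))
    (hBB : ∀ i j, i ≠ j → Commute (B i) (B j))
    (hAB : ∀ i j, i ≠ j → Commute (A i) (B j)) (AC : Finset (Fin N)) (s : Fin N → ℤ) {T : Fin N}
    (hT : T ∈ AC) (n : ℤ) : Commute (A T + n • B T) (obsProd A B AC s) := by
  apply Commute.list_prod_right
  intro x hx
  obtain ⟨i, hi, rfl⟩ := List.mem_map.mp hx
  have hiAC : i ∉ AC := by simpa using (List.mem_filter.mp hi).2
  have : T ≠ i := fun h => hiAC (h ▸ hT)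
  exact factor_comm_obs hAA hBB hAB this n _

lemma bellTerm_R (A B : Fin N → H →ₗ[ℂ] H) (AC : Finset (Fin N)) (u : Fin N → ℤ) (hu0 : ∀ i ∈ AC, u i = 0) :
    bellTerm A B AC u = obsProd A B AC u := by
  unfold bellTerm obsProd
  have : ((List.finRange N).filter (fun i => i ∈ AC ∧ u i ≠ 0)) = [] := by
    rw [List.filter_eq_nil_iff]
    intro i _
    simp only [decide_eq_true_eq, not_and, ne_eq, not_not]
    exact fun h => hu0 i h
  rw [this]
  simp

lemma bellTerm_P (A B : Fin N → H →ₗ[ℂ] H) (AC : Finset (Fin N)) (s : Fin N → ℤ) {T : Fin N}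
    (hT : T ∈ AC) (hsT : s T ≠ 0) (h0 : ∀ i ∈ AC, i ≠ T → s i = 0) :
    bellTerm A B AC s = (A T + s T • B T) * obsProd A B AC s := by
  unfold bellTerm obsProd
  have : ((List.finRange N).filter (fun i => i ∈ AC ∧ s i ≠ 0)) = [T] := by
    have h1 : ((List.finRange N).filter (fun i => i ∈ AC ∧ s i ≠ 0))
        = ((List.finRange N).filter (fun i => decide (i = T))) := by
      apply List.filter_congr
      intro i _
      simp only [decide_eq_decide, decide_eq_true_eq]
      constructor
      · rintro ⟨h1, h2⟩
        by_contra hne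
        exact h2 (h0 i h1 hne)
      · rintro rfl
        exact ⟨hT, hsT⟩
    rw [h1, List.filter_eq, List.count_eq_one_of_mem (List.nodup_finRange N)
      (List.mem_finRange T), List.replicate_one]
  rw [this]
  simp
end AB

lemma list_sum_sub' {α M : Type} [AddCommGroup M] (l : List α) (f : α → M) (g : M) :
    (l.map (fun a => g - f a)).sum = l.length • g - (l.map f).sum := by
  induction l with
  | nil => simp
  | cons a l ih => simp only [List.map_cons, List.sum_cons, ih, List.length_cons, succ_nsmul]; abel

lemma pos_list_sum (L : List (H →ₗ[ℂ] H)) (h : ∀ x ∈ L, ∀ φ : H, 0 ≤ (⟪φ, x φ⟫_ℂ).re) :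
    ∀ φ : H, 0 ≤ (⟪φ, L.sum φ⟫_ℂ).re := by
  induction L with
  | nil => intro φ; simp
  | cons x L ih =>
    intro φ
    rw [List.sum_cons, LinearMap.add_apply, inner_add_right, Complex.add_re]
    exact add_nonneg (h x (by simp) φ) (ih (fun y hy => h y (by simp [hy])) φ)

section Main
variable {A B : Fin N → H →ₗ[ℂ] H}

lemma factor_sym (hAsa : ∀ i, (A i).IsSymmetric) (hBsa : ∀ i, (B i).IsSymmetric)
    (T : Fin N) (n : ℤ) : (A T + n • B T).IsSymmetric := by
  have h : A T + n • B T = A T + ((n : ℂ) • B T) := by rw [Int.cast_smul_eq_zsmul]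
  rw [h]
  intro x y
  simp [LinearMap.add_apply, LinearMap.smul_apply, inner_add_left, inner_add_right,
    inner_smul_left, inner_smul_right, hAsa T x y, hBsa T x y]

lemma pair_pos (hAsa : ∀ i, (A i).IsSymmetric) (hBsa : ∀ i, (B i).IsSymmetric)
    (hA2 : ∀ i, A i * A i = 1) (hB2 : ∀ i, B i * B i = 1)
    (hAA : ∀ i j, i ≠ j → Commute (A i) (A j))
    (hBB : ∀ i j, i ≠ j → Commute (B i) (B j))
    (hAB : ∀ i j, i ≠ j → Commute (A i) (B j))
    (AC : Finset (Fin N)) (s t : Fin N → ℤ)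
    (hs : ∀ i, s i = -1 ∨ s i = 0 ∨ s i = 1) (ht : ∀ i, t i = -1 ∨ t i = 0 ∨ t i = 1)
    {T : Fin N} (hT : T ∈ AC) (hst : s T * t T = -1)
    (hoth : ∀ i ∈ AC, i ≠ T → s i = 0 ∧ t i = 0) :
    ∀ φ : H, 0 ≤ (⟪φ, ((((2 * Real.sqrt 2 : ℝ)) : ℂ) • (1 : H →ₗ[ℂ] H)
      - (bellTerm A B AC s + bellTerm A B AC t)) φ⟫_ℂ).re := by
  have hsT : s T ≠ 0 := by intro h0; rw [h0] at hst; simp at hst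
  have htT : t T ≠ 0 := by intro h0; rw [h0] at hst; simp at hst
  have hXeq : bellTerm A B AC s = (A T + s T • B T) * obsProd A B AC s :=
    bellTerm_P A B AC s hT hsT (fun i hi hne => (hoth i hi hne).1)
  have hYeq : bellTerm A B AC t = (A T + t T • B T) * obsProd A B AC t :=
    bellTerm_P A B AC t hT htT (fun i hi hne => (hoth i hi hne).2)
  -- symmetry
  have hXsym : (bellTerm A B AC s).IsSymmetric := by
    rw [hXeq]
    exact mul_sym (factor_sym hAsa hBsa T _)
      (obsProd_sym hAsa hBsa hAA hBB hAB AC s)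
      (factor_comm_obsProd hAA hBB hAB AC s hT _)
  have hYsym : (bellTerm A B AC t).IsSymmetric := by
    rw [hYeq]
    exact mul_sym (factor_sym hAsa hBsa T _)
      (obsProd_sym hAsa hBsa hAA hBB hAB AC t)
      (factor_comm_obsProd hAA hBB hAB AC t hT _)
  -- squares
  have hXsq : bellTerm A B AC s * bellTerm A B AC s
      = (A T + s T • B T) * (A T + s T • B T) := by
    rw [hXeq, ((factor_comm_obsProd hAA hBB hAB AC s hT (s T)).symm).mul_mul_mul_comm,
      obsProd_sq hA2 hB2 hAA hBB hAB, mul_one]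
  have hYsq : bellTerm A B AC t * bellTerm A B AC t
      = (A T + t T • B T) * (A T + t T • B T) := by
    rw [hYeq, ((factor_comm_obsProd hAA hBB hAB AC t hT (t T)).symm).mul_mul_mul_comm,
      obsProd_sq hA2 hB2 hAA hBB hAB, mul_one]
  have hcases : (s T = 1 ∧ t T = -1) ∨ (s T = -1 ∧ t T = 1) := by
    rcases hs T with h1|h1|h1 <;> rcases ht T with h2|h2|h2 <;>
      rw [h1, h2] at hst <;> norm_num at hst <;> [exact Or.inr ⟨h1, h2⟩; exact Or.inl ⟨h1, h2⟩]
  have hsum : bellTerm A B AC s * bellTerm A B AC s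
      + bellTerm A B AC t * bellTerm A B AC t = (4 : ℂ) • 1 := by
    rw [hXsq, hYsq]
    rcases hcases with ⟨h1, h2⟩ | ⟨h1, h2⟩ <;> rw [h1, h2] <;>
      · simp only [one_smul, neg_smul, mul_add, add_mul, mul_neg, neg_mul, neg_neg,
          hA2 T, hB2 T]
        module
  exact sos_pos hXsym hYsym hsum

lemma u_pos (hAsa : ∀ i, (A i).IsSymmetric) (hBsa : ∀ i, (B i).IsSymmetric)
    (hA2 : ∀ i, A i * A i = 1) (hB2 : ∀ i, B i * B i = 1)
    (hAA : ∀ i j, i ≠ j → Commute (A i) (A j))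
    (hBB : ∀ i j, i ≠ j → Commute (B i) (B j))
    (hAB : ∀ i j, i ≠ j → Commute (A i) (B j))
    (AC : Finset (Fin N)) (u : Fin N → ℤ) (hu0 : ∀ i ∈ AC, u i = 0) :
    ∀ φ : H, 0 ≤ (⟪φ, ((1 : H →ₗ[ℂ] H) - bellTerm A B AC u) φ⟫_ℂ).re := by
  rw [bellTerm_R A B AC u hu0]
  exact inv_pos_part (obsProd_sym hAsa hBsa hAA hBB hAB AC u)
    (obsProd_sq hA2 hB2 hAA hBB hAB AC u)

end Main

theorem quantum_general_bell_bound [FiniteDimensional ℂ H]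
    (A B : Fin N → H →ₗ[ℂ] H)
    (hAsa : ∀ i, (A i).IsSymmetric) (hBsa : ∀ i, (B i).IsSymmetric)
    (hA2 : ∀ i, A i * A i = 1) (hB2 : ∀ i, B i * B i = 1)
    (hAA : ∀ i j, i ≠ j → Commute (A i) (A j))
    (hBB : ∀ i j, i ≠ j → Commute (B i) (B j))
    (hAB : ∀ i j, i ≠ j → Commute (A i) (B j))
    (AC : Finset (Fin N))
    (P : List ((Fin N → ℤ) × (Fin N → ℤ))) (R : List (Fin N → ℤ))
    (hsignP : ∀ p ∈ P, (∀ i, p.1 i = -1 ∨ p.1 i = 0 ∨ p.1 i = 1) ∧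
                       (∀ i, p.2 i = -1 ∨ p.2 i = 0 ∨ p.2 i = 1))
    (hsignR : ∀ u ∈ R, ∀ i, u i = -1 ∨ u i = 0 ∨ u i = 1)
    -- Requirement 1
    (hreq1 : ∀ p ∈ P, ∃ T ∈ AC, p.1 T * p.2 T = -1 ∧
      ∀ i ∈ AC, i ≠ T → p.1 i = 0 ∧ p.2 i = 0)
    -- Requirement 2
    (hreq2 : ∀ u ∈ R, ∀ i ∈ AC, u i = 0) :
    (∀ φ : H,
      0 ≤ (⟪φ, (((2 * Real.sqrt 2 * P.length + R.length : ℝ) : ℂ) •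
              (1 : H →ₗ[ℂ] H)
            - ((P.map (fun p => bellTerm A B AC p.1 + bellTerm A B AC p.2)).sum
               + (R.map (fun u => bellTerm A B AC u)).sum)) φ⟫_ℂ).re) ∧
    (∀ ψ : H, ‖ψ‖ = 1 →
      (⟪ψ, ((P.map (fun p => bellTerm A B AC p.1 + bellTerm A B AC p.2)).sum
            + (R.map (fun u => bellTerm A B AC u)).sum) ψ⟫_ℂ).re
        ≤ 2 * Real.sqrt 2 * P.length + R.length) := by
  have part1 : ∀ φ : H,
      0 ≤ (⟪φ, (((2 * Real.sqrt 2 * P.length + R.length : ℝ) : ℂ) •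
              (1 : H →ₗ[ℂ] H)
            - ((P.map (fun p => bellTerm A B AC p.1 + bellTerm A B AC p.2)).sum
               + (R.map (fun u => bellTerm A B AC u)).sum)) φ⟫_ℂ).re := by
    have hop : (((2 * Real.sqrt 2 * P.length + R.length : ℝ) : ℂ) • (1 : H →ₗ[ℂ] H)
        - ((P.map (fun p => bellTerm A B AC p.1 + bellTerm A B AC p.2)).sum
           + (R.map (fun u => bellTerm A B AC u)).sum))
        = (P.map (fun p => (((2 * Real.sqrt 2 : ℝ)) : ℂ) • (1 : H →ₗ[ℂ] H)
             - (bellTerm A B AC p.1 + bellTerm A B AC p.2))).sum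
          + (R.map (fun u => (1 : H →ₗ[ℂ] H) - bellTerm A B AC u)).sum := by
      rw [list_sum_sub' P (fun p => bellTerm A B AC p.1 + bellTerm A B AC p.2)
            ((((2 * Real.sqrt 2 : ℝ)) : ℂ) • 1),
          list_sum_sub' R (fun u => bellTerm A B AC u) 1]
      have hc : (((2 * Real.sqrt 2 * P.length + R.length : ℝ) : ℂ) • (1 : H →ₗ[ℂ] H))
          = P.length • ((((2 * Real.sqrt 2 : ℝ)) : ℂ) • (1 : H →ₗ[ℂ] H))
            + R.length • (1 : H →ₗ[ℂ] H) := by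
        rw [← Nat.cast_smul_eq_nsmul ℂ P.length, ← Nat.cast_smul_eq_nsmul ℂ R.length]
        push_cast
        module
      rw [hc]; abel
    rw [hop]
    intro φ
    rw [LinearMap.add_apply, inner_add_right, Complex.add_re]
    refine add_nonneg ?_ ?_
    · refine pos_list_sum _ ?_ φ
      intro x hx
      obtain ⟨p, hp, rfl⟩ := List.mem_map.mp hx
      obtain ⟨T, hT, hst, hoth⟩ := hreq1 p hp
      exact pair_pos hAsa hBsa hA2 hB2 hAA hBB hAB AC p.1 p.2 (hsignP p hp).1
        (hsignP p hp).2 hT hst (fun i hi hne => hoth i hi hne)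
    · refine pos_list_sum _ ?_ φ
      intro x hx
      obtain ⟨u, hu, rfl⟩ := List.mem_map.mp hx
      exact u_pos hAsa hBsa hA2 hB2 hAA hBB hAB AC u (hreq2 u hu)
  refine ⟨part1, ?_⟩
  intro ψ hψ
  have h1 := part1 ψ
  rw [LinearMap.sub_apply, LinearMap.smul_apply, Module.End.one_apply, inner_sub_right,
    inner_smul_right, Complex.sub_re, Complex.mul_re] at h1
  have h2 : (⟪ψ, ψ⟫_ℂ).re = 1 := by
    have h := inner_self_eq_norm_sq (𝕜 := ℂ) ψ
    rw [hψ] at h; simpa using h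
  have h3 : (⟪ψ, ψ⟫_ℂ).im = 0 := by
    rw [← RCLike.im_to_complex]; exact inner_self_im ψ
  rw [h2, h3, Complex.ofReal_re, Complex.ofReal_im] at h1
  linarith

end
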